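/- arXiv:2412.07884 — 5 statements merged into one kernel-verified Lean document; each statement's English description precedes it below -/
import Mathlib

section
/- Let q be a prime power and n ≥ 1. The F_q-order of every additive character of F_{q^n} is a monic divisor of x^n − 1, and for each monic divisor f ∈ F_q[x] of x^n − 1, there exist exactly Φ_q(f) additive characters of F_{q^n} with F_q-order equal to f. -/
open Polynomial

noncomputable section

/-- `f ∘ α := Σ a_i α^{q^i}` for `f = Σ a_i x^i ∈ F_q[x]` and `α` in an extension. -/
def circQ {K L : Type*} [Field K] [Field L] [Algebra K L] (q : ℕ) (f : K[X]) (α : L) : L :=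
  ∑ i ∈ f.support, algebraMap K L (f.coeff i) * α ^ q ^ i

/-- `m` is the `F_q`-order of the additive character `ψ`: the monic generator of the
ideal of `h ∈ F_q[x]` such that `h ∘ ψ` is trivial. -/
def IsOrdChar {K L : Type*} [Field K] [Field L] [Algebra K L]
    (q : ℕ) (m : K[X]) (ψ : AddChar L ℂ) : Prop :=
  m.Monic ∧ ∀ h : K[X], (∀ x : L, ψ (circQ q h x) = 1) ↔ m ∣ h

/-- Polynomial Euler totient `Φ_q(f)`. -/
def Phi {K : Type*} [Field K] (f : K[X]) : ℕ :=
  Nat.card ((K[X] ⧸ Ideal.span {f})ˣ)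

namespace Stmt11Aux

/-! ### Generic facts about ideals of `K[X]` -/

variable {K : Type*} [Field K]

/-- Monic generator of a nonzero ideal. -/
def mgen (I : Ideal K[X]) : K[X] :=
  letI := Classical.decEq K
  normalize (Submodule.IsPrincipal.generator I)

lemma span_mgen (I : Ideal K[X]) : Ideal.span {mgen I} = I := by
  letI := Classical.decEq K
  rw [mgen, Ideal.span_singleton_eq_span_singleton.mpr (normalize_associated _),
    Ideal.span_singleton_generator]

lemma monic_mgen {I : Ideal K[X]} (hI : I ≠ ⊥) : (mgen I).Monic := by
  letI := Classical.decEq K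
  refine Polynomial.monic_normalize fun h0 => hI ?_
  rw [← Ideal.span_singleton_generator I, h0, Ideal.span_singleton_eq_bot]

lemma monic_eq_of_span_eq {a b : K[X]} (ha : a.Monic) (hb : b.Monic)
    (h : Ideal.span {a} = Ideal.span ({b} : Set K[X])) : a = b :=
  Polynomial.eq_of_monic_of_associated ha hb (Ideal.span_singleton_eq_span_singleton.mp h)

lemma mgen_span {d : K[X]} (hd : d.Monic) : mgen (Ideal.span {d}) = d := by
  have hne : Ideal.span ({d} : Set K[X]) ≠ ⊥ := by
    rw [Ne, Ideal.span_singleton_eq_bot]; exact hd.ne_zero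
  exact monic_eq_of_span_eq (monic_mgen hne) hd (span_mgen _)

lemma mem_iff_mgen_dvd {I : Ideal K[X]} {h : K[X]} : h ∈ I ↔ mgen I ∣ h := by
  rw [← Ideal.mem_span_singleton, span_mgen]

/-! ### The finset of monic divisors -/

variable [Fintype K]

lemma finite_monic_dvd (f : K[X]) (hf : f ≠ 0) : {d : K[X] | d.Monic ∧ d ∣ f}.Finite := by
  have h1 : Finite {d : K[X] // d.natDegree ≤ f.natDegree} := by
    refine Finite.of_injective
      (fun d => (fun i => d.1.coeff i : Fin (f.natDegree + 1) → K)) ?_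
    intro a b hab
    refine Subtype.ext (Polynomial.ext fun i => ?_)
    rcases le_or_gt i f.natDegree with hi | hi
    · exact congrFun hab ⟨i, Nat.lt_succ_of_le hi⟩
    · rw [Polynomial.coeff_eq_zero_of_natDegree_lt (lt_of_le_of_lt a.2 hi),
        Polynomial.coeff_eq_zero_of_natDegree_lt (lt_of_le_of_lt b.2 hi)]
  have h2 : Finite ↥{d : K[X] | d.Monic ∧ d ∣ f} :=
    Finite.of_injective
      (fun d => (⟨d.1, Polynomial.natDegree_le_of_dvd d.2.2 hf⟩ :
        {d : K[X] // d.natDegree ≤ f.natDegree}))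
      (fun a b hab => by
        have h := congrArg (fun v : {d : K[X] // d.natDegree ≤ f.natDegree} => v.val) hab
        exact Subtype.ext h)
  exact Set.finite_coe_iff.mp h2

open scoped Classical in
/-- The finset of monic divisors of `f`. -/
def mdiv (f : K[X]) : Finset K[X] :=
  if hf : f = 0 then ∅ else (finite_monic_dvd f hf).toFinset

lemma mem_mdiv {f d : K[X]} (hf : f ≠ 0) : d ∈ mdiv f ↔ d.Monic ∧ d ∣ f := by
  classical
  rw [mdiv, dif_neg hf, Set.Finite.mem_toFinset]
  rfl

/-- Generic partition-by-order counting lemma. -/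
lemma card_partition {α : Type*} [Finite α] (ord : α → K[X]) {f : K[X]} (hf : f ≠ 0)
    (h : ∀ a, (ord a).Monic ∧ ord a ∣ f) :
    Nat.card α = ∑ d ∈ mdiv f, Nat.card {a : α // ord a = d} := by
  classical
  cases nonempty_fintype α
  calc Nat.card α = Finset.univ.card := by rw [Nat.card_eq_fintype_card]; rfl
    _ = ∑ d ∈ mdiv f, (Finset.univ.filter fun a => ord a = d).card :=
        Finset.card_eq_sum_card_fiberwise (fun a _ => (mem_mdiv hf).mpr (h a))
    _ = ∑ d ∈ mdiv f, Nat.card {a : α // ord a = d} := by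
        refine Finset.sum_congr rfl fun d _ => ?_
        rw [Nat.card_eq_fintype_card, Fintype.card_subtype]

lemma natDegree_lt_of_proper_dvd {d f : K[X]} (hd : d.Monic) (hf : f.Monic)
    (hdvd : d ∣ f) (hne : d ≠ f) : d.natDegree < f.natDegree := by
  obtain ⟨e, rfl⟩ := hdvd
  have he : e ≠ 0 := right_ne_zero_of_mul hf.ne_zero
  have hemonic : e.Monic := by
    have := hf.leadingCoeff
    rw [Polynomial.leadingCoeff_mul, hd.leadingCoeff, one_mul] at this
    exact this
  rw [Polynomial.natDegree_mul hd.ne_zero he]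
  rcases Nat.eq_zero_or_pos e.natDegree with h0 | hpos
  · exfalso
    apply hne
    have : e = 1 := hemonic.natDegree_eq_zero.mp h0
    rw [this, mul_one]
  · omega

/-! ### Frobenius and the order ideal of a character -/

section Frob

variable {L : Type*} [Field L] [Algebra K L] {q n : ℕ}

lemma frob_pow_apply (φ : L →ₗ[K] L) (hφ : ∀ x, φ x = x ^ q) :
    ∀ (i : ℕ) (x : L), (φ ^ i) x = x ^ q ^ i := by
  intro i
  induction i with
  | zero => intro x; simp
  | succ i ih =>
      intro x
      rw [pow_succ', Module.End.mul_apply, ih, hφ, ← pow_mul, ← pow_succ]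

lemma aeval_frob_apply (φ : L →ₗ[K] L) (hφ : ∀ x, φ x = x ^ q) (h : K[X]) (x : L) :
    aeval φ h x = circQ q h x := by
  rw [Polynomial.aeval_endomorphism, circQ, Polynomial.sum_def]
  refine Finset.sum_congr rfl fun i _ => ?_
  rw [Algebra.smul_def, frob_pow_apply φ hφ]

/-- The ideal of polynomials annihilating a character. -/
def ordIdeal (φ : L →ₗ[K] L) (ψ : AddChar L ℂ) : Ideal K[X] where
  carrier := {h | ∀ x : L, ψ (aeval φ h x) = 1}
  zero_mem' := by intro x; simp
  add_mem' := by
    intro a b ha hb x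
    rw [map_add, LinearMap.add_apply, AddChar.map_add_eq_mul, ha x, hb x, one_mul]
  smul_mem' := by
    intro c h hh x
    have : aeval φ (c • h) x = aeval φ h (aeval φ c x) := by
      rw [smul_eq_mul, mul_comm, map_mul, Module.End.mul_apply]
    rw [this]; exact hh _

lemma mem_ordIdeal {φ : L →ₗ[K] L} {ψ : AddChar L ℂ} {h : K[X]} :
    h ∈ ordIdeal φ ψ ↔ ∀ x : L, ψ (aeval φ h x) = 1 := Iff.rfl

lemma aeval_X_pow_sub_one (φ : L →ₗ[K] L) (hφ : ∀ x, φ x = x ^ q) [Finite L]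
    (hcardL : Nat.card L = q ^ n) (x : L) : aeval φ ((X : K[X]) ^ n - 1) x = 0 := by
  letI : Fintype L := Fintype.ofFinite L
  rw [map_sub, map_one, map_pow, aeval_X, LinearMap.sub_apply, Module.End.one_apply,
    frob_pow_apply φ hφ]
  have : q ^ n = Fintype.card L := by rw [← hcardL, Nat.card_eq_fintype_card]
  rw [this, FiniteField.pow_card, sub_self]

lemma monic_X_pow_sub_one (hn : 1 ≤ n) : ((X : K[X]) ^ n - 1).Monic := by
  have := Polynomial.monic_X_pow_sub_C (1 : K) (Nat.one_le_iff_ne_zero.mp hn)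
  rwa [map_one] at this

lemma X_pow_sub_one_mem (φ : L →ₗ[K] L) (hφ : ∀ x, φ x = x ^ q) [Finite L]
    (hcardL : Nat.card L = q ^ n) (ψ : AddChar L ℂ) :
    ((X : K[X]) ^ n - 1) ∈ ordIdeal φ ψ := by
  intro x
  rw [aeval_X_pow_sub_one φ hφ hcardL, AddChar.map_zero_eq_one]

lemma ordIdeal_ne_bot (φ : L →ₗ[K] L) (hφ : ∀ x, φ x = x ^ q) [Finite L]
    (hcardL : Nat.card L = q ^ n) (hn : 1 ≤ n) (ψ : AddChar L ℂ) :
    ordIdeal φ ψ ≠ ⊥ := by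
  intro hbot
  have := X_pow_sub_one_mem φ hφ hcardL ψ
  rw [hbot, Ideal.mem_bot] at this
  exact (monic_X_pow_sub_one (K := K) hn).ne_zero this

/-- The order of a character. -/
def ordChar (φ : L →ₗ[K] L) (ψ : AddChar L ℂ) : K[X] := mgen (ordIdeal φ ψ)

lemma isOrdChar_iff_span {φ : L →ₗ[K] L} (hφ : ∀ x, φ x = x ^ q) {m : K[X]}
    {ψ : AddChar L ℂ} :
    IsOrdChar q m ψ ↔ m.Monic ∧ ordIdeal φ ψ = Ideal.span {m} := by
  unfold IsOrdChar
  refine and_congr_right fun _ => ?_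
  constructor
  · intro h
    ext g
    rw [mem_ordIdeal, Ideal.mem_span_singleton, ← h g]
    constructor
    · intro hg x; rw [← aeval_frob_apply φ hφ]; exact hg x
    · intro hg x; rw [aeval_frob_apply φ hφ]; exact hg x
  · intro h g
    have : (∀ x : L, ψ (circQ q g x) = 1) ↔ g ∈ ordIdeal φ ψ := by
      constructor
      · intro hg x; rw [aeval_frob_apply φ hφ]; exact hg x
      · intro hg x; rw [← aeval_frob_apply φ hφ]; exact hg x
    rw [this, h, Ideal.mem_span_singleton]

lemma isOrdChar_iff_ordChar {φ : L →ₗ[K] L} (hφ : ∀ x, φ x = x ^ q) [Finite L]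
    (hcardL : Nat.card L = q ^ n) (hn : 1 ≤ n) {m : K[X]} (hm : m.Monic)
    {ψ : AddChar L ℂ} :
    IsOrdChar q m ψ ↔ ordChar φ ψ = m := by
  rw [isOrdChar_iff_span hφ]
  constructor
  · rintro ⟨-, hspan⟩
    rw [ordChar, hspan, mgen_span hm]
  · rintro rfl
    exact ⟨monic_mgen (ordIdeal_ne_bot φ hφ hcardL hn ψ), (span_mgen _).symm⟩

lemma ordChar_monic {φ : L →ₗ[K] L} (hφ : ∀ x, φ x = x ^ q) [Finite L]
    (hcardL : Nat.card L = q ^ n) (hn : 1 ≤ n) (ψ : AddChar L ℂ) :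
    (ordChar φ ψ).Monic := monic_mgen (ordIdeal_ne_bot φ hφ hcardL hn ψ)

lemma ordChar_dvd_iff {φ : L →ₗ[K] L} {ψ : AddChar L ℂ} {f : K[X]} :
    (∀ x : L, ψ (aeval φ f x) = 1) ↔ ordChar φ ψ ∣ f := by
  rw [← mem_ordIdeal, mem_iff_mgen_dvd]; rfl


/-! ### Counting kernels of linearized polynomials -/

lemma card_ker_le (hq2 : 2 ≤ q) (φ : L →ₗ[K] L) (hφ : ∀ x, φ x = x ^ q) [Finite L]
    {d : K[X]} (hd : d.Monic) :
    Nat.card {x : L // aeval φ d x = 0} ≤ q ^ d.natDegree := by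
  classical
  set P : L[X] := ∑ i ∈ d.support, C (algebraMap K L (d.coeff i)) * X ^ q ^ i with hP
  have heval : ∀ x : L, P.eval x = aeval φ d x := by
    intro x
    rw [aeval_frob_apply φ hφ, circQ, hP, Polynomial.eval_finset_sum]
    refine Finset.sum_congr rfl fun i _ => ?_
    rw [eval_mul, eval_C, eval_pow, eval_X]
  have hcoeff : P.coeff (q ^ d.natDegree) = 1 := by
    rw [hP, Polynomial.finset_sum_coeff, Finset.sum_eq_single d.natDegree]
    · rw [coeff_C_mul, coeff_X_pow, if_pos rfl, mul_one, hd.coeff_natDegree, map_one]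
    · intro i _ hne
      rw [coeff_C_mul, coeff_X_pow, if_neg, mul_zero]
      intro hqe
      exact hne (Nat.pow_right_injective hq2 hqe.symm)
    · intro hnotmem
      exact absurd (Polynomial.natDegree_mem_support_of_nonzero hd.ne_zero) hnotmem
  have hPne : P ≠ 0 := fun h0 => by simp [h0] at hcoeff
  have hdeg : P.natDegree ≤ q ^ d.natDegree := by
    rw [hP]
    apply Polynomial.natDegree_sum_le_of_forall_le
    intro i hi
    refine (Polynomial.natDegree_C_mul_le _ _).trans ?_
    rw [Polynomial.natDegree_X_pow]
    exact Nat.pow_le_pow_right (by omega) (Polynomial.le_natDegree_of_mem_supp i hi)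
  have hsub : {x : L | aeval φ d x = 0} ⊆ ↑P.roots.toFinset := by
    intro x hx
    simp only [Finset.coe_insert, Multiset.mem_toFinset, Finset.mem_coe]
    rw [Polynomial.mem_roots hPne]
    rw [Polynomial.IsRoot, heval x]
    exact hx
  calc Nat.card {x : L // aeval φ d x = 0} = {x : L | aeval φ d x = 0}.ncard :=
        (Nat.card_coe_set_eq _)
    _ ≤ (↑P.roots.toFinset : Set L).ncard := Set.ncard_le_ncard hsub (Set.toFinite _)
    _ = P.roots.toFinset.card := Set.ncard_coe_finset _
    _ ≤ Multiset.card P.roots := Multiset.toFinset_card_le _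
    _ ≤ P.natDegree := Polynomial.card_roots' P
    _ ≤ q ^ d.natDegree := hdeg

lemma card_ker_eq (hq2 : 2 ≤ q) (φ : L →ₗ[K] L) (hφ : ∀ x, φ x = x ^ q) [Finite L]
    (hcardL : Nat.card L = q ^ n) {d e : K[X]} (hde : d * e = (X : K[X]) ^ n - 1)
    (hd : d.Monic) (he : e.Monic) :
    Nat.card {x : L // aeval φ d x = 0} = q ^ d.natDegree := by
  have hn_deg : d.natDegree + e.natDegree = n := by
    have h1 : ((X : K[X]) ^ n - 1).natDegree = n := by
      have := Polynomial.natDegree_X_pow_sub_C (n := n) (r := (1 : K))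
      rwa [map_one] at this
    rw [← h1, ← hde, Polynomial.natDegree_mul hd.ne_zero he.ne_zero]
  -- the additive endomorphisms
  set Te : L →+ L := (aeval φ e).toAddMonoidHom with hTe
  have hrange_le : ∀ y ∈ Te.range, aeval φ d y = 0 := by
    rintro y ⟨x, rfl⟩
    have : aeval φ d (aeval φ e x) = aeval φ (d * e) x := by
      rw [map_mul, Module.End.mul_apply]
    rw [hTe]
    show aeval φ d (aeval φ e x) = 0
    rw [this, hde, aeval_X_pow_sub_one φ hφ hcardL]
  -- rank-nullity for Te
  have hrn : Nat.card L = Nat.card Te.range * Nat.card Te.ker := by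
    rw [AddSubgroup.card_eq_card_quotient_mul_card_addSubgroup Te.ker]
    congr 1
    exact Nat.card_congr (QuotientAddGroup.quotientKerEquivRange Te).toEquiv
  have hker_e : Nat.card Te.ker = Nat.card {x : L // aeval φ e x = 0} :=
    Nat.card_congr (Equiv.subtypeEquivRight fun x => by
      rw [AddMonoidHom.mem_ker]; rfl)
  have hrange_card : Nat.card Te.range ≤ Nat.card {x : L // aeval φ d x = 0} :=
    Nat.card_le_card_of_injective
      (fun y => ⟨y.1, hrange_le y.1 y.2⟩)
      (fun a b hab => by
        have h := congrArg (fun v : {x : L // aeval φ d x = 0} => v.val) hab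
        exact Subtype.ext h)
  have hle_d := card_ker_le hq2 φ hφ (d := d) hd
  have hle_e := card_ker_le hq2 φ hφ (d := e) he
  have hpos_e : 0 < Nat.card {x : L // aeval φ e x = 0} := by
    have : Nonempty {x : L // aeval φ e x = 0} := ⟨⟨0, by simp⟩⟩
    exact Nat.card_pos
  -- now pure arithmetic
  set kd := Nat.card {x : L // aeval φ d x = 0}
  set ke := Nat.card {x : L // aeval φ e x = 0}
  have hprod_ge : q ^ n ≤ kd * ke := by
    calc q ^ n = Nat.card L := hcardL.symm
      _ = Nat.card Te.range * Nat.card Te.ker := hrn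
      _ = Nat.card Te.range * ke := by rw [hker_e]
      _ ≤ kd * ke := Nat.mul_le_mul_right _ hrange_card
  have hprod_le : kd * ke ≤ q ^ d.natDegree * q ^ e.natDegree :=
    Nat.mul_le_mul hle_d hle_e
  have hqn : q ^ d.natDegree * q ^ e.natDegree = q ^ n := by
    rw [← pow_add, hn_deg]
  have : kd * ke = q ^ d.natDegree * ke := by
    have h1 : kd * ke ≤ q ^ d.natDegree * ke := Nat.mul_le_mul_right _ hle_d
    have h2 : q ^ d.natDegree * ke ≤ q ^ d.natDegree * q ^ e.natDegree :=
      Nat.mul_le_mul_left _ hle_e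
    omega
  exact Nat.eq_of_mul_eq_mul_right hpos_e this


/-! ### Counting characters annihilated by `f` -/

lemma card_char_trivial (hq2 : 2 ≤ q) (hn : 1 ≤ n) (φ : L →ₗ[K] L)
    (hφ : ∀ x, φ x = x ^ q) [Finite L] (hcardL : Nat.card L = q ^ n)
    {f : K[X]} (hf : f.Monic) (hdvd : f ∣ (X : K[X]) ^ n - 1) :
    Nat.card {ψ : AddChar L ℂ // ∀ x : L, ψ (aeval φ f x) = 1} = q ^ f.natDegree := by
  obtain ⟨e, he⟩ := hdvd
  have hemonic : e.Monic := by
    have h := monic_X_pow_sub_one (K := K) hn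
    rw [he] at h
    exact hf.of_mul_monic_left h
  set T : L →+ L := (aeval φ f).toAddMonoidHom with hT
  set S : AddSubgroup L := T.range with hS
  let B : AddChar (L ⧸ S) ℂ → {ψ : AddChar L ℂ // ∀ x : L, ψ (aeval φ f x) = 1} :=
    fun χ => ⟨χ.compAddMonoidHom (QuotientAddGroup.mk' S), fun x => by
      rw [AddChar.compAddMonoidHom_apply]
      have hz : (QuotientAddGroup.mk' S) (aeval φ f x) = 0 :=
        (QuotientAddGroup.eq_zero_iff _).mpr ⟨x, rfl⟩
      rw [hz, AddChar.map_zero_eq_one]⟩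
  have hBinj : Function.Injective B := by
    intro χ₁ χ₂ h
    have h' := congrArg Subtype.val h
    exact AddChar.compAddMonoidHom_injective_left _ (QuotientAddGroup.mk'_surjective S) h'
  have hBsurj : Function.Surjective B := by
    rintro ⟨ψ, hψ⟩
    have hunit : ∀ x : L, IsUnit (ψ x) := fun x => ψ.val_isUnit x
    have hmul : ∀ x y : L, (hunit (x + y)).unit = (hunit x).unit * (hunit y).unit :=
      fun x y => Units.ext (by
        rw [Units.val_mul, IsUnit.unit_spec, IsUnit.unit_spec, IsUnit.unit_spec,
          AddChar.map_add_eq_mul])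
    let g : L →+ Additive ℂˣ := AddMonoidHom.mk'
      (fun x => Additive.ofMul (hunit x).unit)
      (fun x y => congrArg Additive.ofMul (hmul x y))
    have hgS : ∀ s ∈ S, g s = 0 := by
      rintro s ⟨x, rfl⟩
      have h1 : (hunit (T x)).unit = 1 := Units.ext (by
        rw [IsUnit.unit_spec, Units.val_one]
        exact hψ x)
      show Additive.ofMul (hunit (T x)).unit = 0
      rw [h1]; rfl
    let lift : L ⧸ S →+ Additive ℂˣ := QuotientAddGroup.lift S g hgS
    refine ⟨{ toFun := fun y => ((Additive.toMul (lift y) : ℂˣ) : ℂ),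
              map_zero_eq_one' := by
                show ((Additive.toMul (lift 0) : ℂˣ) : ℂ) = 1
                rw [map_zero]; rfl
              map_add_eq_mul' := fun a b => by
                show ((Additive.toMul (lift (a + b)) : ℂˣ) : ℂ)
                  = ((Additive.toMul (lift a) : ℂˣ) : ℂ) * ((Additive.toMul (lift b) : ℂˣ) : ℂ)
                rw [map_add]
                rw [← Units.val_mul]
                rfl }, ?_⟩
    apply Subtype.ext
    apply AddChar.ext
    intro x
    show ((Additive.toMul (lift ((QuotientAddGroup.mk' S) x)) : ℂˣ) : ℂ) = ψ x
    have h2 : lift ((QuotientAddGroup.mk' S) x) = g x := rfl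
    rw [h2]
    show (((hunit x).unit : ℂˣ) : ℂ) = ψ x
    exact IsUnit.unit_spec _
  have h1 : Nat.card {ψ : AddChar L ℂ // ∀ x : L, ψ (aeval φ f x) = 1}
      = Nat.card (AddChar (L ⧸ S) ℂ) :=
    (Nat.card_eq_of_bijective B ⟨hBinj, hBsurj⟩).symm
  have h2 : Nat.card (AddChar (L ⧸ S) ℂ) = Nat.card (L ⧸ S) := by
    letI : Fintype (L ⧸ S) := Fintype.ofFinite _
    rw [Nat.card_eq_fintype_card, Nat.card_eq_fintype_card, AddChar.card_eq]
  have h3 : Nat.card (L ⧸ S) * Nat.card S = Nat.card L :=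
    (AddSubgroup.card_eq_card_quotient_mul_card_addSubgroup S).symm
  have h4 : Nat.card S * Nat.card T.ker = Nat.card L := by
    rw [AddSubgroup.card_eq_card_quotient_mul_card_addSubgroup T.ker]
    congr 1
    exact (Nat.card_congr (QuotientAddGroup.quotientKerEquivRange T).toEquiv).symm
  have h5 : Nat.card T.ker = q ^ f.natDegree := by
    have heq : Nat.card T.ker = Nat.card {x : L // aeval φ f x = 0} :=
      Nat.card_congr (Equiv.subtypeEquivRight fun x => by
        rw [AddMonoidHom.mem_ker]; rfl)
    rw [heq]
    exact card_ker_eq hq2 φ hφ hcardL he.symm hf hemonic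
  have hSpos : 0 < Nat.card S := Nat.card_pos
  have : Nat.card {ψ : AddChar L ℂ // ∀ x : L, ψ (aeval φ f x) = 1} * Nat.card S
      = q ^ f.natDegree * Nat.card S := by
    rw [h1, h2, h3, ← h5]
    rw [mul_comm] at h4 ⊢
    rw [← h4]
    exact mul_comm _ _
  exact Nat.eq_of_mul_eq_mul_right hSpos this

end Frob

/-! ### The quotient ring side: Gauss identity for `Phi` -/

section QuotSide

variable {q : ℕ}

/-- The torsion ideal of an element of `K[X] ⧸ (f)`. -/
def torId (f : K[X]) (x : K[X] ⧸ Ideal.span {f}) : Ideal K[X] where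
  carrier := {h | Ideal.Quotient.mk (Ideal.span {f}) h * x = 0}
  zero_mem' := by simp
  add_mem' := by
    intro a b ha hb
    simp only [Set.mem_setOf_eq, map_add, add_mul] at *
    rw [ha, hb, add_zero]
  smul_mem' := by
    intro c h hh
    simp only [smul_eq_mul, Set.mem_setOf_eq, map_mul] at *
    rw [mul_assoc, hh, mul_zero]

lemma mem_torId {f h : K[X]} {x : K[X] ⧸ Ideal.span {f}} :
    h ∈ torId f x ↔ Ideal.Quotient.mk (Ideal.span {f}) h * x = 0 := Iff.rfl

lemma f_mem_torId (f : K[X]) (x : K[X] ⧸ Ideal.span {f}) : f ∈ torId f x := by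
  rw [mem_torId, (Ideal.Quotient.eq_zero_iff_dvd _ _).mpr dvd_rfl, zero_mul]

lemma torId_ne_bot {f : K[X]} (hf : f ≠ 0) (x : K[X] ⧸ Ideal.span {f}) :
    torId f x ≠ ⊥ := by
  intro hbot
  have := f_mem_torId f x
  rw [hbot, Ideal.mem_bot] at this
  exact hf this

/-- The order of an element of `K[X] ⧸ (f)`. -/
def ordQ (f : K[X]) (x : K[X] ⧸ Ideal.span {f}) : K[X] := mgen (torId f x)

lemma ordQ_monic {f : K[X]} (hf : f ≠ 0) (x : K[X] ⧸ Ideal.span {f}) :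
    (ordQ f x).Monic := monic_mgen (torId_ne_bot hf x)

lemma ordQ_dvd (f : K[X]) (x : K[X] ⧸ Ideal.span {f}) : ordQ f x ∣ f :=
  mem_iff_mgen_dvd.mp (f_mem_torId f x)

lemma card_fiber_eq_phi {f d : K[X]} (hf : f.Monic) (hd : d.Monic) (hdvd : d ∣ f) :
    Nat.card {x : K[X] ⧸ Ideal.span {f} // ordQ f x = d} = Phi d := by
  obtain ⟨c, hc⟩ := hdvd
  have hc0 : c ≠ 0 := right_ne_zero_of_mul (hc ▸ hf.ne_zero)
  have hd0 : d ≠ 0 := hd.ne_zero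
  set mkf := Ideal.Quotient.mk (Ideal.span {f}) with hmkf
  set mkd := Ideal.Quotient.mk (Ideal.span {d}) with hmkd
  have hrepS : Function.Surjective mkd := Ideal.Quotient.mk_surjective
  set rep : (K[X] ⧸ Ideal.span {d}) → K[X] := Function.surjInv hrepS with hrepdef
  have hrep : ∀ y, mkd (rep y) = y := Function.surjInv_eq hrepS
  -- membership in the torsion ideal of `mkf (c * t)`
  have sub1 : ∀ h t : K[X], (h ∈ torId f (mkf (c * t)) ↔ d ∣ h * t) := by
    intro h t
    rw [mem_torId, ← map_mul, Ideal.Quotient.eq_zero_iff_dvd]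
    constructor
    · intro hh
      have : d * c ∣ (h * t) * c := by
        rw [← hc]
        have : h * (c * t) = h * t * c := by ring
        rwa [this] at hh
      exact (mul_dvd_mul_iff_right hc0).mp this
    · intro hh
      have : d * c ∣ (h * t) * c := (mul_dvd_mul_iff_right hc0).mpr hh
      rw [← hc] at this
      have heq : h * t * c = h * (c * t) := by ring
      rwa [heq] at this
  -- if `t` is a unit mod `d`, the torsion ideal is `(d)`
  have tor_unit : ∀ t : K[X], IsUnit (mkd t) → torId f (mkf (c * t)) = Ideal.span {d} := by
    intro t ht
    ext h
    rw [sub1 h t, Ideal.mem_span_singleton]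
    constructor
    · intro hh
      have h1 : mkd (h * t) = 0 := (Ideal.Quotient.eq_zero_iff_dvd _ _).mpr hh
      rw [map_mul] at h1
      rw [← Ideal.Quotient.eq_zero_iff_dvd (x := d) (y := h)]
      exact (ht.mul_left_eq_zero).mp h1
    · intro hh
      exact hh.mul_right t
  have ordQ_unit : ∀ t : K[X], IsUnit (mkd t) → ordQ f (mkf (c * t)) = d := by
    intro t ht
    rw [ordQ, tor_unit t ht, mgen_span hd]
  -- the bijection from units
  set W : (K[X] ⧸ Ideal.span {d})ˣ → {x : K[X] ⧸ Ideal.span {f} // ordQ f x = d} :=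
    fun u => ⟨mkf (c * rep ↑u), by
      refine ordQ_unit _ ?_
      rw [hrep]
      exact u.isUnit⟩ with hW
  have hWinj : Function.Injective W := by
    intro u v huv
    have h1 : mkf (c * rep ↑u) = mkf (c * rep ↑v) := congrArg Subtype.val huv
    have h2 : f ∣ c * rep ↑u - c * rep ↑v := by
      rw [← Ideal.Quotient.eq_zero_iff_dvd, map_sub, h1, sub_self]
    have h3 : d ∣ rep ↑u - rep ↑v := by
      have : d * c ∣ (rep ↑u - rep ↑v) * c := by
        rw [← hc]
        have heq : (rep ↑u - rep ↑v) * c = c * rep ↑u - c * rep ↑v := by ring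
        rwa [heq]
      exact (mul_dvd_mul_iff_right hc0).mp this
    have h4 : mkd (rep ↑u) = mkd (rep ↑v) := by
      have : mkd (rep ↑u - rep ↑v) = 0 := (Ideal.Quotient.eq_zero_iff_dvd _ _).mpr h3
      rw [map_sub, sub_eq_zero] at this
      exact this
    rw [hrep, hrep] at h4
    exact Units.ext h4
  have hWsurj : Function.Surjective W := by
    rintro ⟨x, hx⟩
    obtain ⟨g, rfl⟩ := Ideal.Quotient.mk_surjective x
    have htor : torId f (mkf g) = Ideal.span {d} := by
      rw [← span_mgen (torId f (mkf g))]
      rw [ordQ] at hx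
      rw [hx]
    -- `d` kills `mk g`, so `c ∣ g`
    have hdg : f ∣ d * g := by
      have : d ∈ torId f (mkf g) := by
        rw [htor]; exact Ideal.mem_span_singleton.mpr dvd_rfl
      rw [mem_torId, ← map_mul, Ideal.Quotient.eq_zero_iff_dvd] at this
      exact this
    have hcg : c ∣ g := by
      have : d * c ∣ d * g := by rw [← hc]; exact hdg
      exact (mul_dvd_mul_iff_left hd0).mp this
    obtain ⟨t, rfl⟩ := hcg
    -- `t` is a unit mod `d`
    have htd : ∀ h : K[X], d ∣ h * t ↔ d ∣ h := by
      intro h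
      have h1 : h ∈ torId f (mkf (c * t)) ↔ d ∣ h * t := sub1 h t
      have h2 : h ∈ Ideal.span ({d} : Set K[X]) ↔ d ∣ h := Ideal.mem_span_singleton
      rw [← h1, htor, h2]
    have hunit : IsUnit (mkd t) := by
      obtain ⟨a, ha⟩ := Submodule.IsPrincipal.principal (Ideal.span ({d, t} : Set K[X]))
      have had : a ∣ d := by
        have : d ∈ Ideal.span ({d, t} : Set K[X]) :=
          Ideal.subset_span (Set.mem_insert d {t})
        rw [ha] at this
        exact Ideal.mem_span_singleton.mp this
      have hat : a ∣ t := by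
        have : t ∈ Ideal.span ({d, t} : Set K[X]) :=
          Ideal.subset_span (Set.mem_insert_of_mem d rfl)
        rw [ha] at this
        exact Ideal.mem_span_singleton.mp this
      obtain ⟨d', hd'⟩ := had
      obtain ⟨t', ht'⟩ := hat
      have hdd' : d ∣ d' := by
        rw [← htd d']
        have heq : d' * t = d * t' := by rw [hd', ht']; ring
        rw [heq]
        exact Dvd.intro t' rfl
      obtain ⟨s, hs⟩ := hdd'
      have haunit : IsUnit a := by
        have : d * 1 = d * (s * a) := by
          rw [mul_one]
          calc d = a * d' := hd'
            _ = a * (d * s) := by rw [hs]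
            _ = d * (s * a) := by ring
        have h1 : (1 : K[X]) = s * a := mul_left_cancel₀ hd0 this
        exact IsUnit.of_mul_eq_one (a := a) s (by rw [mul_comm, ← h1])
      have htop : Ideal.span ({d, t} : Set K[X]) = ⊤ := by
        rw [ha]
        exact Ideal.span_singleton_eq_top.mpr haunit
      have hone : (1 : K[X]) ∈ Ideal.span ({d, t} : Set K[X]) := by
        rw [htop]; trivial
      obtain ⟨u', v', huv⟩ := Ideal.mem_span_pair.mp hone
      refine IsUnit.of_mul_eq_one (mkd v') ?_
      have : mkd (u' * d + v' * t) = 1 := by rw [huv, map_one]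
      rw [map_add, map_mul, map_mul] at this
      have hzd : mkd d = 0 := (Ideal.Quotient.eq_zero_iff_dvd _ _).mpr dvd_rfl
      rw [hzd, mul_zero, zero_add] at this
      rw [mul_comm] at this
      exact this
    -- produce the preimage
    refine ⟨hunit.unit, ?_⟩
    apply Subtype.ext
    show mkf (c * rep ↑hunit.unit) = mkf (c * t)
    have h5 : mkd (rep ↑hunit.unit) = mkd t := by rw [hrep, IsUnit.unit_spec]
    have h6 : d ∣ rep ↑hunit.unit - t := by
      have : mkd (rep ↑hunit.unit - t) = 0 := by rw [map_sub, h5, sub_self]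
      rwa [Ideal.Quotient.eq_zero_iff_dvd] at this
    have h7 : f ∣ c * rep ↑hunit.unit - c * t := by
      obtain ⟨w, hw⟩ := h6
      refine ⟨w, ?_⟩
      rw [hc]
      have : c * rep ↑hunit.unit - c * t = c * (rep ↑hunit.unit - t) := by ring
      rw [this, hw]; ring
    rw [← sub_eq_zero, ← map_sub, Ideal.Quotient.eq_zero_iff_dvd]
    exact h7
  rw [Phi]
  exact (Nat.card_eq_of_bijective W ⟨hWinj, hWsurj⟩).symm

lemma card_quot [Fintype K] (hcard : Fintype.card K = q) {f : K[X]} (hf : f.Monic) :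
    Nat.card (K[X] ⧸ Ideal.span {f}) = q ^ f.natDegree := by
  have b : Module.Basis (Fin f.natDegree) K (AdjoinRoot f) := AdjoinRoot.powerBasisAux' hf
  letI : Fintype (AdjoinRoot f) := Module.fintypeOfFintype b
  have hcf : Fintype.card (AdjoinRoot f) = Fintype.card K ^ f.natDegree := by
    rw [Module.card_fintype b, Fintype.card_fin]
  show Nat.card (AdjoinRoot f) = q ^ f.natDegree
  rw [Nat.card_eq_fintype_card, hcf, hcard]

lemma gauss_sum_phi [Fintype K] (hcard : Fintype.card K = q) {f : K[X]} (hf : f.Monic) :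
    ∑ d ∈ mdiv f, Phi d = q ^ f.natDegree := by
  letI : Fintype (AdjoinRoot f) := Module.fintypeOfFintype (AdjoinRoot.powerBasisAux' hf)
  haveI : Finite (K[X] ⧸ Ideal.span {f}) := by
    show Finite (AdjoinRoot f)
    exact Finite.of_fintype _
  have hpart := card_partition (ordQ f) hf.ne_zero
    (fun x => ⟨ordQ_monic hf.ne_zero x, ordQ_dvd f x⟩)
  rw [card_quot hcard hf] at hpart
  have hcong : ∑ d ∈ mdiv f, Nat.card {x : K[X] ⧸ Ideal.span {f} // ordQ f x = d}
      = ∑ d ∈ mdiv f, Phi d := by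
    refine Finset.sum_congr rfl fun d hd => ?_
    obtain ⟨hdm, hddvd⟩ := (mem_mdiv hf.ne_zero).mp hd
    exact card_fiber_eq_phi hf hdm hddvd
  rw [← hcong, ← hpart]

end QuotSide

end Stmt11Aux

open Stmt11Aux in
theorem stmt_11 (p q n : ℕ) (hp : p.Prime) (hq : ∃ k : ℕ, 0 < k ∧ q = p ^ k) (hn : 1 ≤ n)
    (K L : Type*) [Field K] [Fintype K] [Field L] [Algebra K L]
    (hcard : Fintype.card K = q) (hrank : Module.finrank K L = n) :
    (∀ (ψ : AddChar L ℂ) (m : K[X]), IsOrdChar q m ψ → m.Monic ∧ m ∣ X ^ n - 1) ∧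
      ∀ f : K[X], f.Monic → f ∣ X ^ n - 1 →
        Nat.card {ψ : AddChar L ℂ // IsOrdChar q f ψ} = Phi f := by
  -- basic instances and facts
  haveI : Fact p.Prime := ⟨hp⟩
  have hq2 : 2 ≤ q := by
    obtain ⟨k, hk0, rfl⟩ := hq
    calc 2 ≤ p := hp.two_le
      _ = p ^ 1 := (pow_one p).symm
      _ ≤ p ^ k := Nat.pow_le_pow_right hp.pos hk0
  haveI : CharP K p := by
    obtain ⟨k, hk0, hqpk⟩ := hq
    have hpd : p ∣ Fintype.card K := by
      rw [hcard, hqpk]; exact dvd_pow_self p hk0.ne'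
    have hdvd : p ∣ ringChar K := (prime_dvd_char_iff_dvd_card p).mpr hpd
    have hrp : (ringChar K).Prime := CharP.char_is_prime K (ringChar K)
    exact ringChar.of_eq ((Nat.prime_dvd_prime_iff_eq hp hrp).mp hdvd).symm
  haveI : CharP L p := charP_of_injective_algebraMap (algebraMap K L).injective p
  haveI : Module.Finite K L := Module.finite_of_finrank_pos (by rw [hrank]; omega)
  haveI : Finite L := Module.finite_of_finite K
  have hcardL : Nat.card L = q ^ n := by
    letI : Fintype L := Fintype.ofFinite L
    rw [Nat.card_eq_fintype_card, Module.card_eq_pow_finrank (K := K) (V := L), hcard, hrank]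
  have hfrobK : ∀ c : K, c ^ q = c := by
    intro c; rw [← hcard]; exact FiniteField.pow_card c
  have hadd : ∀ x y : L, (x + y) ^ q = x ^ q + y ^ q := by
    obtain ⟨k, hk0, rfl⟩ := hq
    exact fun x y => add_pow_char_pow x y p k
  set φ : L →ₗ[K] L :=
    { toFun := fun x => x ^ q
      map_add' := hadd
      map_smul' := fun c x => by
        simp only [RingHom.id_apply]
        rw [Algebra.smul_def, mul_pow, ← map_pow, hfrobK, ← Algebra.smul_def] } with hφdef
  have hφ : ∀ x : L, φ x = x ^ q := fun x => rfl
  -- part 1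
  have part1 : ∀ (ψ : AddChar L ℂ) (m : K[X]), IsOrdChar q m ψ → m.Monic ∧ m ∣ X ^ n - 1 := by
    intro ψ m hm
    refine ⟨hm.1, ?_⟩
    refine (hm.2 ((X : K[X]) ^ n - 1)).mp ?_
    intro x
    rw [← aeval_frob_apply φ hφ, aeval_X_pow_sub_one φ hφ hcardL]
    exact AddChar.map_zero_eq_one ψ
  refine ⟨part1, ?_⟩
  -- the key counting identity
  have key : ∀ f : K[X], f.Monic → f ∣ (X : K[X]) ^ n - 1 →
      q ^ f.natDegree = ∑ d ∈ mdiv f, Nat.card {ψ : AddChar L ℂ // IsOrdChar q d ψ} := by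
    intro f hf hdvd
    have hpart := card_partition (K := K)
      (α := {ψ : AddChar L ℂ // ∀ x : L, ψ (aeval φ f x) = 1})
      (fun a => ordChar φ a.1) hf.ne_zero
      (fun a => ⟨ordChar_monic hφ hcardL hn a.1, ordChar_dvd_iff.mp a.2⟩)
    rw [card_char_trivial hq2 hn φ hφ hcardL hf hdvd] at hpart
    rw [hpart]
    refine Finset.sum_congr rfl fun d hd => ?_
    obtain ⟨hdm, hddvd⟩ := (mem_mdiv hf.ne_zero).mp hd
    have e1 : {a : {ψ : AddChar L ℂ // ∀ x : L, ψ (aeval φ f x) = 1} // ordChar φ a.1 = d}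
        ≃ {ψ : AddChar L ℂ // ordChar φ ψ = d} :=
      { toFun := fun a => ⟨a.1.1, a.2⟩
        invFun := fun ψ => ⟨⟨ψ.1, ordChar_dvd_iff.mpr (by rw [ψ.2]; exact hddvd)⟩, ψ.2⟩
        left_inv := fun a => by ext; rfl
        right_inv := fun ψ => by ext; rfl }
    have e2 : {ψ : AddChar L ℂ // ordChar φ ψ = d} ≃ {ψ : AddChar L ℂ // IsOrdChar q d ψ} :=
      Equiv.subtypeEquivRight fun ψ => (isOrdChar_iff_ordChar hφ hcardL hn hdm).symm
    rw [Nat.card_congr e1, Nat.card_congr e2]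
  -- strong induction on the degree
  have main : ∀ N : ℕ, ∀ f : K[X], f.natDegree = N → f.Monic → f ∣ (X : K[X]) ^ n - 1 →
      Nat.card {ψ : AddChar L ℂ // IsOrdChar q f ψ} = Phi f := by
    intro N
    induction N using Nat.strong_induction_on with
    | _ N IH =>
      intro f hdeg hf hdvd
      classical
      have herase : ∀ d ∈ (mdiv f).erase f,
          Nat.card {ψ : AddChar L ℂ // IsOrdChar q d ψ} = Phi d := by
        intro d hd
        have hd' := Finset.mem_of_mem_erase hd
        obtain ⟨hdm, hddvd⟩ := (mem_mdiv hf.ne_zero).mp hd'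
        have hne := Finset.ne_of_mem_erase hd
        exact IH d.natDegree (hdeg ▸ natDegree_lt_of_proper_dvd hdm hf hddvd hne)
          d rfl hdm (hddvd.trans hdvd)
      have hfmem : f ∈ mdiv f := (mem_mdiv hf.ne_zero).mpr ⟨hf, dvd_rfl⟩
      have h1 : Nat.card {ψ : AddChar L ℂ // IsOrdChar q f ψ}
          + ∑ d ∈ (mdiv f).erase f, Nat.card {ψ : AddChar L ℂ // IsOrdChar q d ψ}
          = q ^ f.natDegree := by
        rw [key f hf hdvd]
        exact Finset.add_sum_erase _ (fun d => Nat.card {ψ : AddChar L ℂ // IsOrdChar q d ψ}) hfmem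
      have h2 : Phi f + ∑ d ∈ (mdiv f).erase f, Phi d = q ^ f.natDegree := by
        rw [← gauss_sum_phi (q := q) hcard hf]
        exact Finset.add_sum_erase _ (fun d : K[X] => Phi d) hfmem
      have h3 : ∑ d ∈ (mdiv f).erase f, Nat.card {ψ : AddChar L ℂ // IsOrdChar q d ψ}
          = ∑ d ∈ (mdiv f).erase f, Phi d := Finset.sum_congr rfl herase
      omega
  exact fun f hf hdvd => main f.natDegree f rfl hf hdvd
end
end

section
/- Let p be a prime, n ≥ 1, q = p^n, and let f(x) = a·x + b ∈ F_p[x] with a ≠ 0. If b = 0 or n ≡ 0 (mod p), then there is no pair (x_0, y_0) ∈ F_q × F_q with y_0^p − y_0 = f(x_0) such that both x_0 and y_0 are normal over F_p. -/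
open Polynomial

noncomputable section

/-- `β` is a normal element over `K`: `{β, β^q, …, β^{q^{n-1}}}` is a `K`-basis of `L`. -/
def IsNormalElem (K : Type*) {L : Type*} [Field K] [Field L] [Algebra K L]
    (q n : ℕ) (β : L) : Prop :=
  ∃ B : Module.Basis (Fin n) K L, ∀ i : Fin n, B i = β ^ q ^ (i : ℕ)

theorem stmt_14 (p n : ℕ) [Fact p.Prime] (hn : 1 ≤ n)
    (L : Type*) [Field L] [Algebra (ZMod p) L]
    (hrank : Module.finrank (ZMod p) L = n)
    (a b : ZMod p) (ha : a ≠ 0) (hb : b = 0 ∨ p ∣ n) :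
    ¬ ∃ x₀ y₀ : L,
        y₀ ^ p - y₀ = algebraMap (ZMod p) L a * x₀ + algebraMap (ZMod p) L b ∧
        IsNormalElem (ZMod p) p n x₀ ∧ IsNormalElem (ZMod p) p n y₀ := by
  rintro ⟨x₀, y₀, heq, ⟨Bx, hBx⟩, ⟨By, hBy⟩⟩
  haveI : CharP L p :=
    charP_of_injective_algebraMap (algebraMap (ZMod p) L).injective p
  haveI : Fintype L := Module.fintypeOfFintype Bx
  have hcard : Fintype.card L = p ^ n := by
    rw [Module.card_fintype Bx, ZMod.card, Fintype.card_fin]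
  -- y₀ ^ p ^ n = y₀
  have hyq : y₀ ^ p ^ n = y₀ := by
    rw [← hcard]; exact FiniteField.pow_card y₀
  set Sx := ∑ i : Fin n, x₀ ^ p ^ (i : ℕ) with hSxdef
  have hSxne : Sx ≠ 0 := by
    intro h
    have h0 : ∑ i : Fin n, (1 : ZMod p) • Bx i = 0 := by
      simpa [hBx] using h
    have := Fintype.linearIndependent_iff.mp Bx.linearIndependent
      (fun _ => (1 : ZMod p)) h0 ⟨0, hn⟩
    exact one_ne_zero this
  -- telescoping: sum of Frobenius iterates of y₀^p - y₀ is zero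
  have hzero : ∑ i : Fin n, (y₀ ^ p - y₀) ^ p ^ (i : ℕ) = 0 := by
    have : ∀ i : ℕ, (y₀ ^ p - y₀) ^ p ^ i = y₀ ^ p ^ (i + 1) - y₀ ^ p ^ i := by
      intro i
      rw [sub_pow_char_pow, ← pow_mul, pow_succ']
    rw [Fin.sum_univ_eq_sum_range (fun i => (y₀ ^ p - y₀) ^ p ^ i) n]
    simp_rw [this]
    rw [Finset.sum_range_sub (fun i => y₀ ^ p ^ i), pow_zero, pow_one, hyq, sub_self]
  -- expand each term via the equation
  have hterm : ∀ i : Fin n, (y₀ ^ p - y₀) ^ p ^ (i : ℕ)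
      = algebraMap (ZMod p) L a * x₀ ^ p ^ (i : ℕ) + algebraMap (ZMod p) L b := by
    intro i
    rw [heq, add_pow_char_pow, mul_pow, ← map_pow, ← map_pow,
      ZMod.pow_card_pow, ZMod.pow_card_pow]
  have hsum : algebraMap (ZMod p) L a * Sx + n • algebraMap (ZMod p) L b = 0 := by
    rw [← hzero, Finset.sum_congr rfl (fun i _ => hterm i), Finset.sum_add_distrib,
      ← Finset.mul_sum, Finset.sum_const, Finset.card_univ, Fintype.card_fin, hSxdef]
  have hbz : n • algebraMap (ZMod p) L b = 0 := by
    rcases hb with rfl | hpn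
    · simp
    · have hn0 : (n : ZMod p) = 0 := (ZMod.natCast_eq_zero_iff n p).mpr hpn
      calc n • algebraMap (ZMod p) L b
          = algebraMap (ZMod p) L (n • b) := (map_nsmul _ _ _).symm
        _ = 0 := by rw [nsmul_eq_mul, hn0, zero_mul, map_zero]
  rw [hbz, add_zero, mul_eq_zero] at hsum
  rcases hsum with h | h
  · exact ha ((injective_iff_map_eq_zero _).mp (algebraMap (ZMod p) L).injective a h)
  · exact hSxne h
end
end

section
/- Let p be a prime and n ≥ 1 with n not divisible by p, and set q = p^n. Then for every α ∈ F_q that is normal over F_p, there exist b ∈ F_p with b ≠ 0 and y_0 ∈ F_q normal over F_p such that y_0^p − y_0 = α + b; that is, the curve y^p − y = x + b contains the F_q-normal point (α, y_0). -/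
open Polynomial

noncomputable section

set_option maxHeartbeats 2000000

theorem stmt_15 (p n : ℕ) [Fact p.Prime] (hn : 1 ≤ n) (hpn : ¬ p ∣ n)
    (L : Type*) [Field L] [Algebra (ZMod p) L]
    (hrank : Module.finrank (ZMod p) L = n)
    (α : L) (hα : IsNormalElem (ZMod p) p n α) :
    ∃ b : ZMod p, b ≠ 0 ∧ ∃ y₀ : L, IsNormalElem (ZMod p) p n y₀ ∧
      y₀ ^ p - y₀ = α + algebraMap (ZMod p) L b := by
  classical
  have hp1 : 1 < p := (Fact.out : p.Prime).one_lt
  haveI : FiniteDimensional (ZMod p) L :=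
    FiniteDimensional.of_finrank_pos (by rw [hrank]; omega)
  haveI : CharP L p := charP_of_injective_algebraMap (algebraMap (ZMod p) L).injective p
  obtain ⟨B, hB⟩ := hα
  haveI : Finite L := Module.finite_of_finite (ZMod p)
  haveI : Fintype L := Fintype.ofFinite L
  haveI : Nonempty (Fin n) := ⟨⟨0, hn⟩⟩
  have hcard : Fintype.card L = p ^ n := by
    rw [Module.card_fintype B, ZMod.card, Fintype.card_fin]
  have hpow : ∀ x : L, x ^ p ^ n = x := fun x => by
    rw [← hcard]; exact FiniteField.pow_card x
  -- Frobenius as a ZMod p-linear map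
  set fr : L →ₗ[ZMod p] L :=
    { toFun := fun x => x ^ p
      map_add' := fun x y => add_pow_char x y p
      map_smul' := fun c x => by
        simp only [RingHom.id_apply]
        show (c • x) ^ p = c • x ^ p
        rw [_root_.smul_pow, ZMod.pow_card] } with hfr
  have fr_apply : ∀ x : L, fr x = x ^ p := fun x => rfl
  -- the "trace" linear map
  set T : L →ₗ[ZMod p] L := ∑ i ∈ Finset.range n, fr ^ i with hT
  have frpow_apply : ∀ (i : ℕ) (x : L), (fr ^ i) x = x ^ p ^ i := by
    intro i
    induction i with
    | zero => intro x; simp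
    | succ k ih =>
      intro x
      rw [pow_succ, Module.End.mul_apply, fr_apply, ih, ← pow_mul, mul_comm, ← pow_succ]
  have T_apply : ∀ x : L, T x = ∑ i ∈ Finset.range n, x ^ p ^ i := by
    intro x
    rw [hT, LinearMap.sum_apply]
    exact Finset.sum_congr rfl fun i _ => frpow_apply i x
  have hTfr : ∀ x : L, T (x ^ p) = T x := by
    intro x
    rw [T_apply, T_apply]
    have h1 : ∑ i ∈ Finset.range n, (x ^ p) ^ p ^ i
        = ∑ i ∈ Finset.range n, x ^ p ^ (i + 1) := by
      refine Finset.sum_congr rfl fun i _ => ?_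
      rw [← pow_mul, ← pow_succ']
    have h2 := Finset.sum_range_succ' (fun i => x ^ p ^ i) n
    have h3 := Finset.sum_range_succ (fun i => x ^ p ^ i) n
    simp only [pow_zero, pow_one, hpow x] at h2 h3
    rw [h1]
    have := h2.symm.trans h3
    exact add_right_cancel this
  have hTpow : ∀ (x : L) (j : ℕ), T (x ^ p ^ j) = T x := by
    intro x j
    induction j with
    | zero => simp
    | succ k ih => rw [pow_succ, pow_mul, hTfr, ih]
  -- sum-of-coordinates functional
  set S : L →ₗ[ZMod p] ZMod p := ∑ i : Fin n, B.coord i with hS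
  have S_apply : ∀ x : L, S x = ∑ i : Fin n, B.repr x i := by
    intro x
    rw [hS, LinearMap.sum_apply]
    exact Finset.sum_congr rfl fun i _ => rfl
  have hTS : ∀ x : L, T x = S x • T α := by
    intro x
    conv_lhs => rw [← B.sum_repr x]
    rw [map_sum]
    have : ∀ i : Fin n, T (B i) = T α := fun i => by rw [hB i, hTpow]
    calc ∑ i : Fin n, T (B.repr x i • B i)
        = ∑ i : Fin n, B.repr x i • T α := by
          refine Finset.sum_congr rfl fun i _ => ?_
          rw [map_smul, this i]
      _ = S x • T α := by rw [← Finset.sum_smul, S_apply]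
  have hTα_ne : T α ≠ 0 := by
    intro h0
    have hTαeq : T α = ∑ i : Fin n, B i := by
      rw [T_apply, ← Fin.sum_univ_eq_sum_range (fun i => α ^ p ^ i) n]
      exact Finset.sum_congr rfl fun i _ => (hB i).symm
    have hsum : ∑ i : Fin n, (1 : ZMod p) • B i = 0 := by
      simp only [one_smul]
      rw [← hTαeq]
      exact h0
    have := Fintype.linearIndependent_iff.mp B.linearIndependent (fun _ => (1 : ZMod p)) hsum
    exact one_ne_zero (this ⟨0, hn⟩)
  have hn0 : (n : ZMod p) ≠ 0 := fun h => hpn ((ZMod.natCast_eq_zero_iff n p).mp h)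
  have hT1 : T 1 = (n : ZMod p) • (1 : L) := by
    rw [T_apply]
    simp [Nat.cast_smul_eq_nsmul]
  set e : ZMod p := S 1 with heS
  have he : (n : ZMod p) • (1 : L) = e • T α := by rw [← hT1, hTS 1]
  have he_ne : e ≠ 0 := by
    intro h
    rw [h, zero_smul] at he
    rcases smul_eq_zero.mp he with h' | h'
    · exact hn0 h'
    · exact one_ne_zero h'
  set b : ZMod p := -e⁻¹ with hbdef
  have hb : b ≠ 0 := neg_ne_zero.mpr (inv_ne_zero he_ne)
  have Sα : S α = 1 := by
    have h0 : B ⟨0, hn⟩ = α := by rw [hB ⟨0, hn⟩]; simp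
    rw [← h0, S_apply]
    simp [Module.Basis.repr_self, Finsupp.single_apply]
  set z : L := α + b • (1 : L) with hzdef
  have hSz : S z = 0 := by
    rw [hzdef, map_add, map_smul, Sα, ← heS, hbdef]
    field_simp
    rw [smul_eq_mul, one_div, neg_mul, inv_mul_cancel₀ he_ne, add_neg_cancel]
  -- Artin-Schreier operator
  set φ : L →ₗ[ZMod p] L := fr - LinearMap.id with hφ
  have φ_apply : ∀ x : L, φ x = x ^ p - x := fun x => rfl
  have hSφ : ∀ x : L, S (φ x) = 0 := by
    intro x
    have hTφ : T (φ x) = 0 := by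
      rw [φ_apply, map_sub, hTfr, sub_self]
    have := hTS (φ x)
    rw [hTφ] at this
    rcases smul_eq_zero.mp this.symm with h' | h'
    · exact h'
    · exact absurd h' hTα_ne
  have hrange_le : LinearMap.range φ ≤ LinearMap.ker S := by
    rintro _ ⟨x, rfl⟩
    exact hSφ x
  -- finrank computations
  have hSrange : LinearMap.range S = ⊤ := by
    rw [eq_top_iff]
    intro c _
    have h1 : (1 : ZMod p) ∈ LinearMap.range S := ⟨α, Sα⟩
    simpa using Submodule.smul_mem _ c h1
  have hkerS : Module.finrank (ZMod p) (LinearMap.ker S) = n - 1 := by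
    have hrn := LinearMap.finrank_range_add_finrank_ker S
    rw [hSrange, finrank_top, Module.finrank_self, hrank] at hrn
    omega
  have hkerφ : Module.finrank (ZMod p) (LinearMap.ker φ) ≤ 1 := by
    haveI : Fintype (LinearMap.ker φ) := Fintype.ofFinite _
    set q : L[X] := X ^ p - X with hq
    have hqXdeg : (X ^ p : L[X]).natDegree = p := natDegree_X_pow p
    have hqdeg : q.natDegree = p := by
      rw [hq, natDegree_sub_eq_left_of_natDegree_lt]
      · exact hqXdeg
      · rw [hqXdeg, natDegree_X]; omega
    have hq0 : q ≠ 0 := by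
      intro h
      rw [h, natDegree_zero] at hqdeg
      omega
    have hcardker : Fintype.card (LinearMap.ker φ) ≤ p := by
      have hinj : Function.Injective
          (fun x : LinearMap.ker φ => (⟨(x : L), by
            rw [Multiset.mem_toFinset, mem_roots hq0]
            have := x.2
            rw [LinearMap.mem_ker, φ_apply] at this
            simp [hq, IsRoot, this]⟩ : q.roots.toFinset)) := by
        intro a b hab
        simp only [Subtype.mk.injEq] at hab
        exact Subtype.ext hab
      calc Fintype.card (LinearMap.ker φ)
          ≤ Fintype.card q.roots.toFinset := Fintype.card_le_of_injective _ hinj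
        _ = q.roots.toFinset.card := Fintype.card_coe _
        _ ≤ Multiset.card q.roots := Multiset.toFinset_card_le _
        _ ≤ q.natDegree := card_roots' q
        _ = p := hqdeg
    have hcardker' : Fintype.card (LinearMap.ker φ)
        = p ^ Module.finrank (ZMod p) (LinearMap.ker φ) := by
      rw [Module.card_fintype (Module.finBasis (ZMod p) (LinearMap.ker φ)), ZMod.card,
        Fintype.card_fin]
    by_contra hcon
    push_neg at hcon
    have hle : p ^ Module.finrank (ZMod p) (LinearMap.ker φ) ≤ p := by
      rw [← hcardker']; exact hcardker
    have h2 : p ^ 2 ≤ p ^ Module.finrank (ZMod p) (LinearMap.ker φ) :=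
      Nat.pow_le_pow_right (by omega) hcon
    have h3 := h2.trans hle
    rw [pow_two] at h3
    nlinarith
  have hrangeφ : Module.finrank (ZMod p) (LinearMap.range φ) ≥ n - 1 := by
    have hrn := LinearMap.finrank_range_add_finrank_ker φ
    rw [hrank] at hrn
    omega
  have hrange_eq : LinearMap.range φ = LinearMap.ker S :=
    Submodule.eq_of_le_of_finrank_le hrange_le (by rw [hkerS]; omega)
  -- solve φ y = z
  have hz_mem : z ∈ LinearMap.range φ := by
    rw [hrange_eq, LinearMap.mem_ker]; exact hSz
  obtain ⟨y, hy⟩ := hz_mem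
  -- adjust to get nonzero "trace"
  set t : ZMod p := if S y = 0 then e⁻¹ else 0 with htdef
  set y' : L := y + t • (1 : L) with hy'def
  have hSy' : S y' ≠ 0 := by
    rw [hy'def, map_add, map_smul, ← heS, htdef]
    by_cases h : S y = 0 <;> simp [h, smul_eq_mul, inv_mul_cancel₀ he_ne]
  have hsmul1p : ∀ c : ZMod p, (c • (1 : L)) ^ p = c • (1 : L) := by
    intro c
    rw [_root_.smul_pow, one_pow, ZMod.pow_card]
  have hφy' : y' ^ p - y' = z := by
    have : φ y' = z := by
      rw [hy'def, map_add, hy]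
      have : φ (t • (1 : L)) = 0 := by
        rw [φ_apply, hsmul1p, sub_self]
      rw [this, add_zero]
    rw [← φ_apply]; exact this
  -- b^(p^i) = b
  have hbpow : ∀ (c : ZMod p) (i : ℕ), c ^ p ^ i = c := by
    intro c i
    induction i with
    | zero => simp
    | succ k ih => rw [pow_succ, pow_mul, ih, ZMod.pow_card]
  -- linear independence of the Frobenius orbit of y'
  have hli : LinearIndependent (ZMod p) (fun i : Fin n => y' ^ p ^ (i : ℕ)) := by
    rw [Fintype.linearIndependent_iff]
    intro g hg
    have hs : ∑ i : Fin n, g i = 0 := by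
      have h1 := congrArg T hg
      rw [map_sum, map_zero] at h1
      have h2 : ∑ i : Fin n, g i • T y' = 0 := by
        rw [← h1]
        refine Finset.sum_congr rfl fun i _ => ?_
        rw [map_smul, hTpow]
      rw [← Finset.sum_smul] at h2
      have hTy' : T y' ≠ 0 := by
        rw [hTS]; exact smul_ne_zero hSy' hTα_ne
      exact (smul_eq_zero.mp h2).resolve_right hTy'
    have h2 : ∑ i : Fin n, g i • α ^ p ^ (i : ℕ) = 0 := by
      have h3 := congrArg φ hg
      rw [map_sum, map_zero] at h3
      simp only [map_smul] at h3
      have hterm : ∀ i : Fin n,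
          φ (y' ^ p ^ (i : ℕ)) = α ^ p ^ (i : ℕ) + b • (1 : L) := by
        intro i
        rw [φ_apply]
        have hc : (y' ^ p ^ (i : ℕ)) ^ p = (y' ^ p) ^ p ^ (i : ℕ) := by
          rw [← pow_mul, ← pow_mul, mul_comm]
        rw [hc, ← sub_pow_char_pow, hφy', hzdef, add_pow_char_pow,
          _root_.smul_pow, one_pow, hbpow]
      simp only [hterm] at h3
      have h4 : ∑ i : Fin n, g i • (α ^ p ^ (i : ℕ) + b • (1 : L))
          = (∑ i : Fin n, g i • α ^ p ^ (i : ℕ)) + (∑ i : Fin n, g i) • (b • (1 : L)) := by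
        rw [Finset.sum_smul]
        rw [← Finset.sum_add_distrib]
        refine Finset.sum_congr rfl fun i _ => ?_
        rw [smul_add]
      rw [h4, hs, zero_smul, add_zero] at h3
      exact h3
    intro i
    refine Fintype.linearIndependent_iff.mp B.linearIndependent g ?_ i
    rw [← h2]
    exact Finset.sum_congr rfl fun j _ => by rw [hB j]
  have hcard' : Fintype.card (Fin n) = Module.finrank (ZMod p) L := by
    rw [Fintype.card_fin, hrank]
  refine ⟨b, hb, y', ⟨basisOfLinearIndependentOfCardEqFinrank hli hcard', fun i => ?_⟩, ?_⟩
  · rw [coe_basisOfLinearIndependentOfCardEqFinrank]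
  · rw [hφy', hzdef, Algebra.algebraMap_eq_smul_one]
end
end

section
/- Let p be a prime, n ≥ 1, q = p^n. If α ∈ F_q is normal over F_p and c ∈ F_p satisfies Tr_{F_q/F_p}(α + c) = 0, then the F_p-order of α + c equals (x^n − 1)/(x − 1). -/
open Polynomial

noncomputable section

/-- `m` is the `F_p`-order of `α`: the monic generator of `{h : h ∘ α = 0}`. -/
def IsOrd {K L : Type*} [Field K] [Field L] [Algebra K L] (q : ℕ) (m : K[X]) (α : L) : Prop :=
  m.Monic ∧ ∀ h : K[X], circQ q h α = 0 ↔ m ∣ h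

section Aux

variable (p : ℕ) [Fact p.Prime] (L : Type*) [Field L] [Algebra (ZMod p) L] [CharP L p]

/-- The Frobenius endomorphism as a `ZMod p`-linear map. -/
def frobL : L →ₗ[ZMod p] L where
  toFun x := x ^ p
  map_add' x y := add_pow_char x y p
  map_smul' c x := by
    simp only [Algebra.smul_def, mul_pow, ← map_pow, ZMod.pow_card, RingHom.id_apply]

variable {p L}

lemma frobL_apply (x : L) : frobL p L x = x ^ p := rfl

lemma frobL_pow (i : ℕ) (x : L) : (frobL p L ^ i) x = x ^ p ^ i := by
  induction i with
  | zero => simp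
  | succ k ih =>
      rw [pow_succ', Module.End.mul_apply, ih, frobL_apply, ← pow_mul, ← pow_succ]

lemma circ_eq (h : (ZMod p)[X]) (x : L) :
    circQ p h x = Polynomial.aeval (frobL p L) h x := by
  rw [Polynomial.aeval_def, Polynomial.eval₂_eq_sum, Polynomial.sum_def,
    LinearMap.coe_sum, Finset.sum_apply]
  simp [circQ, Module.End.mul_apply, frobL_pow, Module.algebraMap_end_apply, Algebra.smul_def]

end Aux

theorem stmt_16 (p n : ℕ) [Fact p.Prime] (hn : 1 ≤ n)
    (L : Type*) [Field L] [Algebra (ZMod p) L]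
    (hrank : Module.finrank (ZMod p) L = n)
    (α : L) (hα : IsNormalElem (ZMod p) p n α)
    (c : ZMod p)
    (htr : ∑ i ∈ Finset.range n, (α + algebraMap (ZMod p) L c) ^ p ^ i = 0) :
    IsOrd p ((X ^ n - 1) / (X - 1) : (ZMod p)[X]) (α + algebraMap (ZMod p) L c) := by
  haveI : CharP L p := charP_of_injective_algebraMap (algebraMap (ZMod p) L).injective p
  set β := α + algebraMap (ZMod p) L c with hβ
  set F := frobL p L with hF
  set g : (ZMod p)[X] := (X ^ n - 1) / (X - 1) with hg
  clear_value β
  have hX1 : (X - 1 : (ZMod p)[X]) ≠ 0 := by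
    have := Polynomial.X_sub_C_ne_zero (1 : ZMod p)
    simpa using this
  have hgeom : (∑ i ∈ Finset.range n, (X : (ZMod p)[X]) ^ i) * (X - 1) = X ^ n - 1 :=
    geom_sum_mul X n
  have hgval : g = ∑ i ∈ Finset.range n, (X : (ZMod p)[X]) ^ i := by
    have hdvd : (X - 1 : (ZMod p)[X]) ∣ X ^ n - 1 := ⟨∑ i ∈ Finset.range n, X ^ i, by rw [mul_comm]; exact hgeom.symm⟩
    have h1 : (X - 1 : (ZMod p)[X]) * g = X ^ n - 1 :=
      EuclideanDomain.mul_div_cancel' hX1 hdvd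
    apply mul_left_cancel₀ hX1
    rw [h1, mul_comm, hgeom]
  have hgmul : g * (X - 1) = X ^ n - 1 := by rw [hgval, hgeom]
  have hXn1 : ((X : (ZMod p)[X]) ^ n - 1).natDegree = n := by
    have : ((X : (ZMod p)[X]) ^ n - C 1).natDegree = n := natDegree_X_pow_sub_C
    simpa using this
  have hg0 : g ≠ 0 := by
    intro h0
    rw [h0, zero_mul] at hgmul
    have := hXn1
    rw [← hgmul] at this
    simp at this
    omega
  have hdegg : g.natDegree + 1 = n := by
    have h1 : (g * (X - 1)).natDegree = g.natDegree + (X - 1 : (ZMod p)[X]).natDegree :=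
      Polynomial.natDegree_mul hg0 hX1
    have h2 : (X - 1 : (ZMod p)[X]).natDegree = 1 := by
      have := Polynomial.natDegree_X_sub_C (1 : ZMod p)
      simpa using this
    rw [hgmul, hXn1, h2] at h1
    omega
  have hmonic : g.Monic := by
    have hprod : (g * (X - 1)).Monic := by
      rw [hgmul]
      have : ((X : (ZMod p)[X]) ^ n - C 1).Monic := monic_X_pow_sub_C 1 (by omega)
      simpa using this
    have hX1m : (X - 1 : (ZMod p)[X]).Monic := by
      have := monic_X_sub_C (1 : ZMod p)
      simpa using this
    unfold Polynomial.Monic at *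
    have := Polynomial.leadingCoeff_mul g (X - 1)
    rw [hprod, hX1m, mul_one] at this
    exact this.symm
  -- multiplication rule for aeval composition
  have hmul : ∀ f h : (ZMod p)[X], ∀ x : L,
      Polynomial.aeval F (f * h) x = Polynomial.aeval F f (Polynomial.aeval F h x) := by
    intro f h x
    rw [map_mul, Module.End.mul_apply]
  -- trace condition: g annihilates β
  have hgβ : Polynomial.aeval F g β = 0 := by
    rw [hgval, map_sum, LinearMap.coe_sum, Finset.sum_apply]
    have : ∀ i ∈ Finset.range n, Polynomial.aeval F ((X : (ZMod p)[X]) ^ i) β = β ^ p ^ i := by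
      intro i _
      rw [Polynomial.aeval_X_pow, frobL_pow]
    rw [Finset.sum_congr rfl this]
    exact htr
  -- (X - 1) acts the same on α and β
  have hfrβα : Polynomial.aeval F ((X : (ZMod p)[X]) - 1) β
      = Polynomial.aeval F ((X : (ZMod p)[X]) - 1) α := by
    have hc : (algebraMap (ZMod p) L c) ^ p = algebraMap (ZMod p) L c := by
      rw [← map_pow, ZMod.pow_card]
    simp only [map_sub, Polynomial.aeval_X, map_one, LinearMap.sub_apply,
      Module.End.one_apply, hF, frobL_apply]
    rw [hβ, add_pow_char, hc]
    ring
  -- normality: no nonzero polynomial of degree < n annihilates α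
  have hnorm : ∀ f : (ZMod p)[X], f ≠ 0 → f.natDegree < n → Polynomial.aeval F f α ≠ 0 := by
    obtain ⟨B, hB⟩ := hα
    intro f hf hdeg hzero
    have hsum : ∑ i : Fin n, f.coeff (i : ℕ) • B i = 0 := by
      have h1 : ∀ i : Fin n, f.coeff (i : ℕ) • B i = f.coeff (i : ℕ) • α ^ p ^ (i : ℕ) := by
        intro i; rw [hB]
      rw [Finset.sum_congr rfl (fun i _ => h1 i),
        Fin.sum_univ_eq_sum_range (fun i => f.coeff i • α ^ p ^ i)]
      rw [Polynomial.aeval_eq_sum_range' hdeg, LinearMap.coe_sum, Finset.sum_apply] at hzero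
      rw [← hzero]
      apply Finset.sum_congr rfl
      intro i _
      rw [LinearMap.smul_apply, frobL_pow]
    have hcoeff := Fintype.linearIndependent_iff.mp B.linearIndependent
      (fun i : Fin n => f.coeff (i : ℕ)) hsum
    have hlead : f.coeff f.natDegree ≠ 0 := by
      rw [← Polynomial.leadingCoeff]
      exact Polynomial.leadingCoeff_ne_zero.mpr hf
    exact hlead (hcoeff ⟨f.natDegree, hdeg⟩)
  constructor
  · exact hmonic
  · intro h
    rw [circ_eq]
    constructor
    · intro hhβ
      set d := EuclideanDomain.gcd g h with hd
      have hdg : d ∣ g := EuclideanDomain.gcd_dvd_left g h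
      have hdh : d ∣ h := EuclideanDomain.gcd_dvd_right g h
      have hd0 : d ≠ 0 := by
        intro h0
        exact hg0 (EuclideanDomain.gcd_eq_zero_iff.mp h0).1
      have hdecomp : d = EuclideanDomain.gcdA g h * g + EuclideanDomain.gcdB g h * h := by
        rw [hd, EuclideanDomain.gcd_eq_gcd_ab]; ring
      have hdβ : Polynomial.aeval F d β = 0 := by
        rw [hdecomp, map_add, LinearMap.add_apply, hmul, hmul, hgβ, hhβ, map_zero,
          map_zero, add_zero]
      have hdα : Polynomial.aeval F (d * ((X : (ZMod p)[X]) - 1)) α = 0 := by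
        rw [hmul, ← hfrβα, ← hmul, mul_comm, hmul, hdβ, map_zero]
      have hddeg : d.natDegree = g.natDegree := by
        by_contra hne
        have hle : d.natDegree ≤ g.natDegree := Polynomial.natDegree_le_of_dvd hdg hg0
        have hlt : d.natDegree < g.natDegree := lt_of_le_of_ne hle hne
        have hdeglt : (d * ((X : (ZMod p)[X]) - 1)).natDegree < n := by
          rw [Polynomial.natDegree_mul hd0 hX1]
          have h2 : ((X : (ZMod p)[X]) - 1).natDegree = 1 := by
            have := Polynomial.natDegree_X_sub_C (1 : ZMod p)
            simpa using this
          rw [h2]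
          omega
        exact hnorm _ (mul_ne_zero hd0 hX1) hdeglt hdα
      obtain ⟨k, hk⟩ := hdg
      have hk0 : k ≠ 0 := by
        rintro rfl
        rw [mul_zero] at hk
        exact hg0 hk
      have hkdeg : k.natDegree = 0 := by
        have := Polynomial.natDegree_mul hd0 hk0
        rw [← hk, hddeg] at this
        omega
      have hkC : k = C (k.coeff 0) := (Polynomial.eq_C_of_natDegree_eq_zero hkdeg)
      have hkc0 : k.coeff 0 ≠ 0 := by
        intro h0
        rw [h0, map_zero] at hkC
        exact hk0 hkC
      have hk1 : k * C (k.coeff 0)⁻¹ = 1 := by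
        nth_rewrite 1 [hkC]
        rw [← Polynomial.C_mul, mul_inv_cancel₀ hkc0, Polynomial.C_1]
      have hgd : g ∣ d := ⟨C (k.coeff 0)⁻¹, by rw [hk, mul_assoc, hk1, mul_one]⟩
      exact hgd.trans hdh
    · rintro ⟨k, rfl⟩
      rw [mul_comm, hmul, hgβ, map_zero]
end
end

section
/- Let p be a prime, n ≥ 1 with n not divisible by p, and q = p^n. Let γ ∈ F_q have F_p-order equal to (x^n − 1)/(x − 1), and let β ∈ F_q satisfy β^p − β = γ. Then for every t ∈ F_p, the F_p-order of β + t is either x^n − 1 or (x^n − 1)/(x − 1), and β + t is normal over F_p if and only if Tr_{F_q/F_p}(β + t) ≠ 0; in particular, there exists t_0 ∈ F_p such that β + t_0 is normal over F_p. -/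
open Polynomial

noncomputable section

namespace Stmt17Aux

variable (p : ℕ) [Fact p.Prime] (L : Type*) [Field L] [Algebra (ZMod p) L]

lemma charp : CharP L p :=
  charP_of_injective_algebraMap (algebraMap (ZMod p) L).injective p

/-- Frobenius as a `ZMod p`-linear endomorphism. -/
def frob : L →ₗ[ZMod p] L where
  toFun x := x ^ p
  map_add' x y := by
    haveI := charp p L
    exact add_pow_char x y p
  map_smul' c x := by
    simp only [_root_.smul_pow, ZMod.pow_card, RingHom.id_apply]

@[simp] lemma frob_apply (x : L) : frob p L x = x ^ p := rfl

lemma frob_pow (i : ℕ) (x : L) : (frob p L ^ i) x = x ^ p ^ i := by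
  induction i generalizing x with
  | zero => simp
  | succ i ih =>
    rw [pow_succ, Module.End.mul_apply, frob_apply, ih, ← pow_mul, ← pow_succ']

variable {p L}

lemma circQ_eq (f : (ZMod p)[X]) (α : L) :
    circQ p f α = Polynomial.aeval (frob p L) f α := by
  rw [circQ, aeval_def, eval₂_eq_sum, Polynomial.sum_def, LinearMap.sum_apply]
  refine Finset.sum_congr rfl fun i _ => ?_
  rw [Module.End.mul_apply, Module.algebraMap_end_apply, frob_pow, Algebra.smul_def]

lemma circ_mul (f g : (ZMod p)[X]) (α : L) :
    circQ p (f * g) α = circQ p f (circQ p g α) := by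
  simp only [circQ_eq, map_mul, Module.End.mul_apply]

lemma circ_zero (f : (ZMod p)[X]) : circQ p f (0 : L) = 0 := by
  rw [circQ_eq]; exact map_zero _

lemma circ_X_sub_one (α : L) : circQ p (X - 1 : (ZMod p)[X]) α = α ^ p - α := by
  rw [circQ_eq, map_sub, map_one, LinearMap.sub_apply, aeval_X, frob_apply,
    Module.End.one_apply]

lemma circ_X_pow_sub_one (n : ℕ) (α : L) :
    circQ p (X ^ n - 1 : (ZMod p)[X]) α = α ^ p ^ n - α := by
  rw [circQ_eq, map_sub, map_one, map_pow, LinearMap.sub_apply, aeval_X,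
    Module.End.one_apply, frob_pow]

lemma circ_geom (n : ℕ) (α : L) :
    circQ p (∑ i ∈ Finset.range n, X ^ i : (ZMod p)[X]) α
      = ∑ i ∈ Finset.range n, α ^ p ^ i := by
  rw [circQ_eq, map_sum, LinearMap.sum_apply]
  exact Finset.sum_congr rfl fun i _ => by rw [map_pow, aeval_X, frob_pow]

lemma circ_finsum (n : ℕ) (c : Fin n → ZMod p) (α : L) :
    circQ p (∑ i : Fin n, C (c i) * X ^ (i : ℕ)) α
      = ∑ i : Fin n, c i • α ^ p ^ (i : ℕ) := by
  rw [circQ_eq, map_sum, LinearMap.sum_apply]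
  refine Finset.sum_congr rfl fun i _ => ?_
  rw [map_mul, map_pow, aeval_X, aeval_C, Module.End.mul_apply,
    Module.algebraMap_end_apply, frob_pow]

lemma circ_of_fixed {δ : L} (hδ : δ ^ p = δ) (k : (ZMod p)[X]) :
    circQ p k δ = algebraMap (ZMod p) L (k.eval 1) * δ := by
  have hpow : ∀ i, δ ^ p ^ i = δ := by
    intro i
    induction i with
    | zero => simp
    | succ i ih => rw [pow_succ, pow_mul, ih, hδ]
  rw [circQ, eval_eq_sum, Polynomial.sum_def, map_sum, Finset.sum_mul]
  exact Finset.sum_congr rfl fun i _ => by rw [hpow, one_pow, mul_one]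

end Stmt17Aux

open Stmt17Aux

theorem stmt_17 (p n : ℕ) [Fact p.Prime] (hn : 1 ≤ n) (hpn : ¬ p ∣ n)
    (L : Type*) [Field L] [Algebra (ZMod p) L]
    (hrank : Module.finrank (ZMod p) L = n)
    (γ : L) (hγ : IsOrd p ((X ^ n - 1) / (X - 1) : (ZMod p)[X]) γ)
    (β : L) (hβ : β ^ p - β = γ) :
    (∀ t : ZMod p,
        (IsOrd p (X ^ n - 1 : (ZMod p)[X]) (β + algebraMap (ZMod p) L t) ∨
          IsOrd p ((X ^ n - 1) / (X - 1) : (ZMod p)[X]) (β + algebraMap (ZMod p) L t)) ∧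
        (IsNormalElem (ZMod p) p n (β + algebraMap (ZMod p) L t) ↔
          ∑ i ∈ Finset.range n, (β + algebraMap (ZMod p) L t) ^ p ^ i ≠ 0)) ∧
      ∃ t₀ : ZMod p, IsNormalElem (ZMod p) p n (β + algebraMap (ZMod p) L t₀) := by
  haveI := charp p L
  haveI : Module.Finite (ZMod p) L :=
    Module.finite_of_finrank_pos (by rw [hrank]; omega)
  haveI : Finite L := Module.finite_of_finite (ZMod p)
  haveI : Fintype L := Fintype.ofFinite L
  haveI : Nonempty (Fin n) := ⟨⟨0, by omega⟩⟩
  have hcard : Fintype.card L = p ^ n := by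
    rw [Module.card_fintype (Module.finBasis (ZMod p) L), ZMod.card, Fintype.card_fin, hrank]
  set g : (ZMod p)[X] := (X ^ n - 1) / (X - 1) with hg_def
  have hXone : (X - 1 : (ZMod p)[X]) ≠ 0 := by
    intro h
    have := congrArg (Polynomial.eval 0) h
    simp at this
  have hgeom : (∑ i ∈ Finset.range n, (X : (ZMod p)[X]) ^ i) * (X - 1) = X ^ n - 1 :=
    geom_sum_mul X n
  have hg_eq : g = ∑ i ∈ Finset.range n, X ^ i := by
    rw [hg_def, ← hgeom, mul_div_cancel_right₀ _ hXone]
  have hfac : g * (X - 1) = X ^ n - 1 := by rw [hg_eq, hgeom]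
  have hkill : ∀ x : L, circQ p (X ^ n - 1 : (ZMod p)[X]) x = 0 := by
    intro x
    rw [circ_X_pow_sub_one, ← hcard, FiniteField.pow_card, sub_self]
  have hXnmonic : (X ^ n - 1 : (ZMod p)[X]).Monic := by
    have := monic_X_pow_sub_C (1 : ZMod p) (by omega : n ≠ 0)
    simpa using this
  have hdegXn : (X ^ n - 1 : (ZMod p)[X]).degree = n := by
    have := degree_X_pow_sub_C (by omega : 0 < n) (1 : ZMod p)
    simpa using this
  have main : ∀ t : ZMod p,
      (IsOrd p (X ^ n - 1 : (ZMod p)[X]) (β + algebraMap (ZMod p) L t) ∨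
        IsOrd p g (β + algebraMap (ZMod p) L t)) ∧
      (IsNormalElem (ZMod p) p n (β + algebraMap (ZMod p) L t) ↔
        ∑ i ∈ Finset.range n, (β + algebraMap (ZMod p) L t) ^ p ^ i ≠ 0) := by
    intro t
    set α : L := β + algebraMap (ZMod p) L t with hα
    have htp : (algebraMap (ZMod p) L t) ^ p = algebraMap (ZMod p) L t := by
      rw [← map_pow, ZMod.pow_card]
    have h1 : circQ p (X - 1 : (ZMod p)[X]) α = γ := by
      rw [circ_X_sub_one, hα, add_pow_char, htp, ← hβ]
      ring
    have hdvd_g : ∀ h : (ZMod p)[X], circQ p h α = 0 → g ∣ h := by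
      intro h hh
      refine (hγ.2 h).mp ?_
      rw [← h1, ← circ_mul, mul_comm, circ_mul, hh, circ_zero]
    have hback : ∀ h : (ZMod p)[X], (X ^ n - 1 : (ZMod p)[X]) ∣ h → circQ p h α = 0 := by
      rintro h ⟨k, rfl⟩
      rw [circ_mul]
      -- circ (X^n-1) (circ k α) = 0
      exact hkill _
    have hδeq : circQ p g α = ∑ i ∈ Finset.range n, α ^ p ^ i := by
      rw [hg_eq, circ_geom]
    by_cases hδ : circQ p g α = 0
    · -- order is g, α not normal
      have hord : IsOrd p g α := by
        refine ⟨hγ.1, fun h => ⟨hdvd_g h, ?_⟩⟩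
        rintro ⟨k, rfl⟩
        rw [mul_comm, circ_mul, hδ, circ_zero]
      have hsum0 : ∑ i ∈ Finset.range n, α ^ p ^ i = 0 := by rw [← hδeq]; exact hδ
      refine ⟨Or.inr hord, ?_, fun hne => absurd hsum0 hne⟩
      rintro ⟨B, hB⟩
      exfalso
      have hli := B.linearIndependent
      have h10 : (1 : ZMod p) = 0 := by
        refine Fintype.linearIndependent_iff.mp hli (fun _ => 1) ?_ ⟨0, by omega⟩
        simp only [one_smul]
        have : ∀ i : Fin n, B i = α ^ p ^ (i : ℕ) := hB
        calc ∑ i : Fin n, B i = ∑ i : Fin n, α ^ p ^ (i : ℕ) := by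
              exact Finset.sum_congr rfl fun i _ => this i
          _ = ∑ i ∈ Finset.range n, α ^ p ^ i := Fin.sum_univ_eq_sum_range (fun i => α ^ p ^ i) n
          _ = 0 := hsum0
      exact one_ne_zero h10
    · -- order is X^n - 1, α normal
      have hfix : (circQ p g α) ^ p = circQ p g α := by
        have h2 : circQ p ((X - 1) * g : (ZMod p)[X]) α = 0 := by
          rw [mul_comm, hfac]; exact hkill α
        rw [circ_mul, circ_X_sub_one] at h2
        exact sub_eq_zero.mp h2
      have hord : IsOrd p (X ^ n - 1 : (ZMod p)[X]) α := by
        refine ⟨hXnmonic, fun h => ⟨?_, hback h⟩⟩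
        intro hh
        obtain ⟨k, rfl⟩ := hdvd_g h hh
        have h2 : circQ p k (circQ p g α) = 0 := by
          rw [← circ_mul, mul_comm]; exact hh
        rw [circ_of_fixed hfix] at h2
        have hk1 : k.eval 1 = 0 := by
          rcases mul_eq_zero.mp h2 with h3 | h3
          · exact (algebraMap (ZMod p) L).injective (by rw [h3, map_zero])
          · exact absurd h3 hδ
        have hdk : (X - 1 : (ZMod p)[X]) ∣ k := by
          have := (dvd_iff_isRoot (p := k) (a := (1 : ZMod p))).mpr hk1
          simpa using this
        obtain ⟨k', rfl⟩ := hdk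
        rw [← hfac]
        exact ⟨k', by ring⟩
      have hsumne : ∑ i ∈ Finset.range n, α ^ p ^ i ≠ 0 := by rw [← hδeq]; exact hδ
      refine ⟨Or.inl hord, fun _ => hsumne, fun _ => ?_⟩
      have hli : LinearIndependent (ZMod p) (fun i : Fin n => α ^ p ^ (i : ℕ)) := by
        rw [Fintype.linearIndependent_iff]
        intro c hc
        have hcirc : circQ p (∑ i : Fin n, C (c i) * X ^ (i : ℕ)) α = 0 := by
          rw [circ_finsum]; exact hc
        have hdvd := (hord.2 _).mp hcirc
        set h : (ZMod p)[X] := ∑ i : Fin n, C (c i) * X ^ (i : ℕ) with hh_def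
        have hdeg : h.degree < (n : WithBot ℕ) := by
          apply lt_of_le_of_lt (degree_sum_le _ _)
          rw [Finset.sup_lt_iff (by exact_mod_cast WithBot.bot_lt_coe n)]
          intro i _
          apply lt_of_le_of_lt (degree_C_mul_X_pow_le _ _)
          exact_mod_cast i.isLt
        have hzero : h = 0 := by
          by_contra hne
          have hle := Polynomial.degree_le_of_dvd hdvd hne
          rw [hdegXn] at hle
          exact absurd (lt_of_le_of_lt hle hdeg) (lt_irrefl _)
        intro i
        have hco : h.coeff (i : ℕ) = c i := by
          rw [hh_def, finset_sum_coeff]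
          simp only [coeff_C_mul, coeff_X_pow]
          rw [Finset.sum_eq_single i]
          · simp
          · intro b _ hb
            have hne : ¬ ((i : ℕ) = (b : ℕ)) := fun hq => hb (Fin.ext hq.symm)
            simp [hne]
          · intro hi; exact absurd (Finset.mem_univ i) hi
        rw [hzero, coeff_zero] at hco
        exact hco.symm
      exact ⟨basisOfLinearIndependentOfCardEqFinrank hli (by simp [hrank]),
        fun i => by rw [coe_basisOfLinearIndependentOfCardEqFinrank]⟩
  refine ⟨main, ?_⟩
  -- existence of t₀
  have hnne : (n : ZMod p) ≠ 0 := by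
    intro h
    exact hpn ((ZMod.natCast_eq_zero_iff n p).mp h)
  have key : ∀ t : ZMod p,
      ∑ i ∈ Finset.range n, (β + algebraMap (ZMod p) L t) ^ p ^ i
        = (∑ i ∈ Finset.range n, β ^ p ^ i) + algebraMap (ZMod p) L ((n : ZMod p) * t) := by
    intro t
    have hterm : ∀ i : ℕ, (β + algebraMap (ZMod p) L t) ^ p ^ i
        = β ^ p ^ i + algebraMap (ZMod p) L t := by
      intro i
      rw [add_pow_char_pow, ← map_pow, ZMod.pow_card_pow]
    calc ∑ i ∈ Finset.range n, (β + algebraMap (ZMod p) L t) ^ p ^ i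
        = ∑ i ∈ Finset.range n, (β ^ p ^ i + algebraMap (ZMod p) L t) :=
          Finset.sum_congr rfl fun i _ => hterm i
      _ = (∑ i ∈ Finset.range n, β ^ p ^ i) + n • algebraMap (ZMod p) L t := by
          rw [Finset.sum_add_distrib, Finset.sum_const, Finset.card_range]
      _ = (∑ i ∈ Finset.range n, β ^ p ^ i) + algebraMap (ZMod p) L ((n : ZMod p) * t) := by
          rw [nsmul_eq_mul, map_mul, map_natCast]
  by_cases hS : (∑ i ∈ Finset.range n, β ^ p ^ i) = 0
  · refine ⟨(n : ZMod p)⁻¹, (main _).2.mpr ?_⟩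
    rw [key, hS, zero_add, mul_inv_cancel₀ hnne, map_one]
    exact one_ne_zero
  · refine ⟨0, (main 0).2.mpr ?_⟩
    rw [key, mul_zero, map_zero, add_zero]
    exact hS
end
end
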